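/- arXiv:1302.4168 — 3 statements merged into one kernel-verified Lean document; each statement's English description precedes it below -/
import Mathlib

section
/- Let G = (V, E) be a finite simple graph with |V| = n and E nonempty, let C ≥ 2 be a capacity, let N′ ≥ 1 be a natural number, and let OPT denote the minimum cost over all placements of G with capacity C having at most N′ members; assume this minimum is attained by some placement 𝒫*. Then for every real α with 0 < α ≤ 1, at least one of the following holds: (i) 2·|E| ≤ (2/(2−α))·OPT, so that any placement of G with capacity C (all of which have cost at most 2·|E|) approximates OPT within a factor 2/(2−α); or (ii) there exists a placement of G with capacity C using at most N′·C/(2α) + 2·n members in which every edge of G is local (i.e., every edge has span 1). In particular, writing N′ = β·N_e with N_e = ⌈n/C⌉, the bound in (ii) is C·N_e·β/(2α) + 2·n members. -/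
open Finset
open scoped Classical

/-- The span of an edge `e` with respect to a family of members `P`:
the minimum number of members of `P` whose union contains both endpoints of `e`. -/
noncomputable def spanOf {V : Type*} {N : ℕ} (P : Fin N → Finset V) (e : Sym2 V) : ℕ :=
  sInf {k : ℕ | ∃ S : Finset (Fin N), S.card = k ∧ ∀ v ∈ e, ∃ i ∈ S, v ∈ P i}

/-- The cost of a family of members `P` for a graph `G`: the sum of spans of all edges. -/
noncomputable def costOf {V : Type*} [Fintype V] [DecidableEq V] (G : SimpleGraph V)
    [DecidableRel G.Adj] {N : ℕ} (P : Fin N → Finset V) : ℕ :=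
  ∑ e ∈ G.edgeFinset, spanOf P e

/-- An edge `e` is local to the family `P` if some member contains both its endpoints. -/
def IsLocal {V : Type*} {N : ℕ} (P : Fin N → Finset V) (e : Sym2 V) : Prop :=
  ∃ i, ∀ v ∈ e, v ∈ P i

/-- `P` is a placement with capacity `C`: each member has at most `C` vertices and
the members cover all of `V` (replication allowed). -/
def IsPlacement {V : Type*} [Fintype V] (C : ℕ) {N : ℕ} (P : Fin N → Finset V) : Prop :=
  (∀ i, (P i).card ≤ C) ∧ ∀ v : V, ∃ i, v ∈ P i

/-- Greedy star-cover: any finite non-diagonal edge set can be covered by sets of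
size at most `c + 1`, using few sets. -/
lemma cover_exists {V : Type*} [Fintype V] [DecidableEq V] (c : ℕ) (hc : 1 ≤ c) :
    ∀ (k : ℕ) (E' : Finset (Sym2 V)), E'.card ≤ k →
    ∃ ℓ : List (Finset V), (∀ s ∈ ℓ, s.card ≤ c + 1) ∧
      (∀ e ∈ E', ∃ s ∈ ℓ, ∀ v ∈ e, v ∈ s) ∧
      c * ℓ.length ≤ E'.card + c * (Finset.univ.filter (fun v => ∃ e ∈ E', v ∈ e)).card := by
  intro k
  induction k with
  | zero =>
    intro E' hcard
    have : E' = ∅ := Finset.card_eq_zero.mp (Nat.le_zero.mp hcard)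
    subst this
    exact ⟨[], by simp, by simp, by simp⟩
  | succ k ih =>
    intro E' hcard
    rcases E'.eq_empty_or_nonempty with rfl | ⟨e₀, he₀⟩
    · exact ⟨[], by simp, by simp, by simp⟩
    revert he₀
    induction e₀ using Sym2.ind with
    | _ a b =>
    intro he₀
    have haE : a ∈ (s(a, b) : Sym2 V) := Sym2.mem_mk_left a b
    set D := E'.filter (fun e => a ∈ e) with hD
    have he₀D : s(a, b) ∈ D := Finset.mem_filter.mpr ⟨he₀, haE⟩
    have hDne : D.Nonempty := ⟨_, he₀D⟩
    obtain ⟨T, hTD, hTne, hTcard, hTcase⟩ :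
        ∃ T ⊆ D, T.Nonempty ∧ T.card ≤ c ∧ (T = D ∨ T.card = c) := by
      by_cases hsmall : D.card ≤ c
      · exact ⟨D, Finset.Subset.refl D, hDne, hsmall, Or.inl rfl⟩
      · obtain ⟨T, hT, hTc⟩ := Finset.exists_subset_card_eq
          (le_of_lt (Nat.lt_of_not_le hsmall) : c ≤ D.card)
        refine ⟨T, hT, ?_, le_of_eq hTc, Or.inr hTc⟩
        rw [← Finset.card_pos, hTc]; omega
    have hTE : T ⊆ E' := hTD.trans (Finset.filter_subset _ _)
    set f : Sym2 V → V := fun e => if h : a ∈ e then Sym2.Mem.other' h else a with hf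
    set s₀ : Finset V := insert a (T.image f) with hs₀
    have hs₀card : s₀.card ≤ c + 1 := by
      calc s₀.card ≤ (T.image f).card + 1 := Finset.card_insert_le _ _
        _ ≤ T.card + 1 := by gcongr; exact Finset.card_image_le
        _ ≤ c + 1 := by omega
    have hs₀cov : ∀ e ∈ T, ∀ v ∈ e, v ∈ s₀ := by
      intro e heT v hv
      have hae : a ∈ e := (Finset.mem_filter.mp (hTD heT)).2
      have hfe : f e = Sym2.Mem.other' hae := dif_pos hae
      have hmem : Sym2.Mem.other' hae ∈ s₀ :=
        Finset.mem_insert_of_mem (hfe ▸ Finset.mem_image_of_mem f heT)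
      have hspec := Sym2.other_spec' hae
      rw [← hspec, Sym2.mem_iff] at hv
      rcases hv with rfl | rfl
      · exact Finset.mem_insert_self _ _
      · exact hmem
    set E₂ := E' \ T with hE₂
    have hE₂sub : E₂ ⊆ E' := Finset.sdiff_subset
    have hE₂card : E₂.card = E'.card - T.card := Finset.card_sdiff_of_subset hTE
    have hTle : T.card ≤ E'.card := Finset.card_le_card hTE
    have hTpos : 1 ≤ T.card := hTne.card_pos
    have hE₂k : E₂.card ≤ k := by omega
    obtain ⟨ℓ', hcap', hcov', hcount'⟩ := ih E₂ hE₂k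
    refine ⟨s₀ :: ℓ', ?_, ?_, ?_⟩
    · intro s hs
      rcases List.mem_cons.mp hs with rfl | hs
      · exact hs₀card
      · exact hcap' s hs
    · intro e he
      by_cases heT : e ∈ T
      · exact ⟨s₀, List.mem_cons_self, hs₀cov e heT⟩
      · obtain ⟨s, hs, hcov⟩ := hcov' e (Finset.mem_sdiff.mpr ⟨he, heT⟩)
        exact ⟨s, List.mem_cons_of_mem _ hs, hcov⟩
    · have hsuppmono : (Finset.univ.filter (fun v => ∃ e ∈ E₂, v ∈ e)) ⊆
          (Finset.univ.filter (fun v => ∃ e ∈ E', v ∈ e)) := by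
        intro v hv
        rw [Finset.mem_filter] at hv ⊢
        obtain ⟨_, e, he, hve⟩ := hv
        exact ⟨Finset.mem_univ _, e, hE₂sub he, hve⟩
      rw [List.length_cons, Nat.mul_add, Nat.mul_one]
      rcases hTcase with rfl | hTc
      · -- T = D : vertex a disappears from the support
        have hav : a ∈ Finset.univ.filter (fun v => ∃ e ∈ E', v ∈ e) :=
          Finset.mem_filter.mpr ⟨Finset.mem_univ _, s(a, b), he₀, haE⟩
        have hsupp2 : (Finset.univ.filter (fun v => ∃ e ∈ E₂, v ∈ e)) ⊆
            (Finset.univ.filter (fun v => ∃ e ∈ E', v ∈ e)).erase a := by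
          intro v hv
          rw [Finset.mem_filter] at hv
          obtain ⟨_, e, he, hve⟩ := hv
          rw [Finset.mem_sdiff] at he
          refine Finset.mem_erase.mpr ⟨?_, hsuppmono (Finset.mem_filter.mpr
            ⟨Finset.mem_univ _, e, Finset.mem_sdiff.mpr he, hve⟩)⟩
          rintro rfl
          exact he.2 (Finset.mem_filter.mpr ⟨he.1, hve⟩)
        have h2 : (Finset.univ.filter (fun v => ∃ e ∈ E₂, v ∈ e)).card + 1 ≤
            (Finset.univ.filter (fun v => ∃ e ∈ E', v ∈ e)).card := by
          have hle := Finset.card_le_card hsupp2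
          rw [Finset.card_erase_of_mem hav] at hle
          have hpos : 1 ≤ (Finset.univ.filter (fun v => ∃ e ∈ E', v ∈ e)).card :=
            Finset.card_pos.mpr ⟨a, hav⟩
          omega
        have h4 := Nat.mul_le_mul_left c h2
        rw [Nat.mul_add, Nat.mul_one] at h4
        have h3 : E₂.card ≤ E'.card := Finset.card_le_card hE₂sub
        linarith
      · -- T.card = c
        have h2 := Nat.mul_le_mul_left c (Finset.card_le_card hsuppmono)
        have h3 : E₂.card + c ≤ E'.card := by omega
        linarith

lemma spanOf_bounds {V : Type*} [Fintype V] {C N : ℕ} {P : Fin N → Finset V}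
    (hP : IsPlacement C P) (e : Sym2 V) :
    1 ≤ spanOf P e ∧ (¬ IsLocal P e → 2 ≤ spanOf P e) := by
  induction e using Sym2.ind with
  | _ a b =>
  obtain ⟨i, hi⟩ := hP.2 a
  obtain ⟨j, hj⟩ := hP.2 b
  have hne : {k : ℕ | ∃ S : Finset (Fin N), S.card = k ∧
      ∀ v ∈ (s(a, b) : Sym2 V), ∃ i ∈ S, v ∈ P i}.Nonempty := by
    refine ⟨({i, j} : Finset (Fin N)).card, {i, j}, rfl, ?_⟩
    intro v hv
    rw [Sym2.mem_iff] at hv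
    rcases hv with rfl | rfl
    · exact ⟨i, by simp, hi⟩
    · exact ⟨j, by simp, hj⟩
  have hmem := Nat.sInf_mem hne
  obtain ⟨S₀, hScard, hScov⟩ := hmem
  have h0 : spanOf P s(a, b) ≠ 0 := by
    intro h
    rw [spanOf] at h
    rw [h] at hScard
    obtain ⟨i', hi', _⟩ := hScov a (Sym2.mem_mk_left a b)
    rw [Finset.card_eq_zero.mp hScard] at hi'
    exact absurd hi' (Finset.notMem_empty _)
  constructor
  · omega
  · intro hnl
    have h1 : spanOf P s(a, b) ≠ 1 := by
      intro h
      rw [spanOf] at h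
      rw [h] at hScard
      obtain ⟨i₀, rfl⟩ := Finset.card_eq_one.mp hScard
      refine hnl ⟨i₀, fun v hv => ?_⟩
      obtain ⟨i', hi', hvi⟩ := hScov v hv
      rw [Finset.mem_singleton] at hi'
      rwa [← hi']
    omega

set_option maxHeartbeats 1000000 in
/-- Let `OPT` be the minimum cost over all placements of `G` with capacity
`C ≥ 2` having at most `N'` members, attained by some placement. Then for every real
`0 < α ≤ 1`, either `2|E| ≤ (2/(2-α)) * OPT` (so every placement, having cost at most
`2|E|`, approximates `OPT` within factor `2/(2-α)`), or there is a placement with capacity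
`C` using at most `N'·C/(2α) + 2n` members in which every edge is local. -/
theorem approx_or_span_one_placement {V : Type*} [Fintype V] [DecidableEq V]
    (G : SimpleGraph V) [DecidableRel G.Adj] (n : ℕ) (hn : Fintype.card V = n)
    (hE : G.edgeFinset.Nonempty) (C : ℕ) (hC : 2 ≤ C) (N' : ℕ) (hN' : 1 ≤ N')
    (OPT : ℕ)
    (hatt : ∃ (M : ℕ) (_ : M ≤ N') (Pstar : Fin M → Finset V),
      IsPlacement C Pstar ∧ costOf G Pstar = OPT)
    (hmin : ∀ (M : ℕ), M ≤ N' → ∀ Q : Fin M → Finset V,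
      IsPlacement C Q → OPT ≤ costOf G Q) :
    ∀ α : ℝ, 0 < α → α ≤ 1 →
      (2 * (G.edgeFinset.card : ℝ) ≤ 2 / (2 - α) * (OPT : ℝ)) ∨
      (∃ (M : ℕ) (P : Fin M → Finset V), IsPlacement C P ∧
        (∀ e ∈ G.edgeFinset, IsLocal P e) ∧
        (M : ℝ) ≤ (N' : ℝ) * (C : ℝ) / (2 * α) + 2 * (n : ℝ)) := by
  intro α hα0 hα1
  by_cases hi : 2 * (G.edgeFinset.card : ℝ) ≤ 2 / (2 - α) * (OPT : ℝ)
  · exact Or.inl hi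
  right
  push_neg at hi
  obtain ⟨M₀, hM₀, Pstar, hPstar, hcost⟩ := hatt
  set L := G.edgeFinset.filter (fun e => IsLocal Pstar e) with hLdef
  set NL := G.edgeFinset.filter (fun e => ¬ IsLocal Pstar e) with hNLdef
  have hsplit : L.card + NL.card = G.edgeFinset.card :=
    Finset.card_filter_add_card_filter_not _
  -- lower bound on OPT
  have hOPT : L.card + 2 * NL.card ≤ OPT := by
    rw [← hcost, costOf,
      ← Finset.sum_filter_add_sum_filter_not G.edgeFinset (fun e => IsLocal Pstar e)]
    apply add_le_add
    · calc L.card = ∑ _e ∈ L, 1 := by simp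
        _ ≤ ∑ e ∈ L, spanOf Pstar e :=
          Finset.sum_le_sum fun e _ => (spanOf_bounds hPstar e).1
    · calc 2 * NL.card = ∑ _e ∈ NL, 2 := by simp [mul_comm]
        _ ≤ ∑ e ∈ NL, spanOf Pstar e := Finset.sum_le_sum fun e he =>
            (spanOf_bounds hPstar e).2 (Finset.mem_filter.mp he).2
  -- upper bound on number of local edges
  have hLbound : L.card ≤ M₀ * Nat.choose C 2 := by
    have hsub : L ⊆ Finset.univ.biUnion
        (fun i : Fin M₀ => (Pstar i).offDiag.image Sym2.mk.uncurry) := by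
      intro e he
      rw [hLdef, Finset.mem_filter] at he
      obtain ⟨heE, hloc⟩ := he
      have hnd : ¬ e.IsDiag :=
        G.not_isDiag_of_mem_edgeSet (SimpleGraph.mem_edgeFinset.mp heE)
      obtain ⟨i, hi⟩ := hloc
      rw [Finset.mem_biUnion]
      refine ⟨i, Finset.mem_univ _, ?_⟩
      revert hnd hi
      induction e using Sym2.ind with
      | _ a b =>
      intro hnd hi
      rw [Finset.mem_image]
      exact ⟨(a, b), Finset.mem_offDiag.mpr
        ⟨hi a (Sym2.mem_mk_left a b), hi b (Sym2.mem_mk_right a b),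
         fun h => hnd (Sym2.mk_isDiag_iff.mpr h)⟩, rfl⟩
    calc L.card ≤ _ := Finset.card_le_card hsub
      _ ≤ ∑ i : Fin M₀, ((Pstar i).offDiag.image Sym2.mk.uncurry).card := Finset.card_biUnion_le
      _ = ∑ i : Fin M₀, ((Pstar i).card).choose 2 := by
          simp [Sym2.card_image_offDiag]
      _ ≤ ∑ _i : Fin M₀, C.choose 2 :=
          Finset.sum_le_sum fun i _ => Nat.choose_le_choose 2 (hPstar.1 i)
      _ = M₀ * C.choose 2 := by simp [mul_comm]
  -- cover of nonlocal edges
  obtain ⟨ℓst, hcap, hcovNL, hcount⟩ := cover_exists (C - 1) (by omega) NL.card NL le_rfl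
  have hsuppn : (Finset.univ.filter (fun v => ∃ e ∈ NL, v ∈ e)).card ≤ n := by
    calc _ ≤ (Finset.univ : Finset V).card := Finset.card_filter_le _ _
      _ = n := hn
  have hcount2 : (C - 1) * ℓst.length ≤ NL.card + (C - 1) * n :=
    le_trans hcount (by have := Nat.mul_le_mul_left (C - 1) hsuppn; omega)
  -- build the new placement
  set lst := List.ofFn Pstar ++ ℓst with hlst
  have hlen : lst.length = M₀ + ℓst.length := by simp [hlst]
  set P : Fin (M₀ + ℓst.length) → Finset V :=
    fun i => lst.get ⟨i.1, by rw [hlen]; exact i.2⟩ with hP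
  have hPmem : ∀ s ∈ lst, ∃ i : Fin (M₀ + ℓst.length), P i = s := by
    intro s hs
    obtain ⟨⟨idx, hidx⟩, hidxeq⟩ := List.mem_iff_get.mp hs
    exact ⟨⟨idx, by rw [← hlen]; exact hidx⟩, hidxeq⟩
  have hlstprop : ∀ s ∈ lst, s.card ≤ C := by
    intro s hs
    rcases List.mem_append.mp hs with hs | hs
    · obtain ⟨i, rfl⟩ := (List.mem_ofFn).mp hs
      exact hPstar.1 i
    · have := hcap s hs
      omega
  have hgetmem : ∀ i : Fin (M₀ + ℓst.length), P i ∈ lst := by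
    intro i
    exact List.get_mem lst _
  have hPplace : IsPlacement C P := by
    constructor
    · intro i
      exact hlstprop _ (hgetmem i)
    · intro v
      obtain ⟨i, hi⟩ := hPstar.2 v
      have hsl : Pstar i ∈ lst := List.mem_append_left _ (((List.mem_ofFn).mpr ⟨i, rfl⟩))
      obtain ⟨j, hj⟩ := hPmem _ hsl
      exact ⟨j, by rw [hj]; exact hi⟩
  have hPlocal : ∀ e ∈ G.edgeFinset, IsLocal P e := by
    intro e he
    by_cases hloc : IsLocal Pstar e
    · obtain ⟨i, hi⟩ := hloc
      have hsl : Pstar i ∈ lst := List.mem_append_left _ (((List.mem_ofFn).mpr ⟨i, rfl⟩))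
      obtain ⟨j, hj⟩ := hPmem _ hsl
      exact ⟨j, by rw [hj]; exact hi⟩
    · obtain ⟨s, hs, hcov⟩ := hcovNL e (Finset.mem_filter.mpr ⟨he, hloc⟩)
      obtain ⟨j, hj⟩ := hPmem _ (List.mem_append_right _ hs)
      exact ⟨j, by rw [hj]; exact hcov⟩
  refine ⟨M₀ + ℓst.length, P, hPplace, hPlocal, ?_⟩
  -- the counting, in ℝ
  have h2α : (0 : ℝ) < 2 - α := by linarith
  rw [div_mul_eq_mul_div, div_lt_iff₀ h2α] at hi
  set mR : ℝ := (G.edgeFinset.card : ℝ) with hmR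
  set lR : ℝ := (L.card : ℝ) with hlR
  set qR : ℝ := (NL.card : ℝ) with hqR
  set lenR : ℝ := (ℓst.length : ℝ) with hlenR
  have hmeq : mR = lR + qR := by rw [hmR, hlR, hqR, ← hsplit]; push_cast; ring
  have hOPT' : lR + 2 * qR ≤ (OPT : ℝ) := by rw [hlR, hqR]; exact_mod_cast hOPT
  have hq : α * qR ≤ (1 - α) * lR := by nlinarith [hi, hOPT', hmeq]
  have hCR : (2 : ℝ) ≤ (C : ℝ) := by exact_mod_cast hC
  have hC1cast : ((C - 1 : ℕ) : ℝ) = (C : ℝ) - 1 := by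
    rw [Nat.cast_sub (by omega)]; norm_num
  have hlbound : 2 * lR ≤ (N' : ℝ) * ((C : ℝ) * ((C : ℝ) - 1)) := by
    have hnat : 2 * L.card ≤ N' * (C * (C - 1)) := by
      have h1 : L.card ≤ N' * C.choose 2 :=
        le_trans hLbound (Nat.mul_le_mul_right _ hM₀)
      have h2 : 2 * C.choose 2 ≤ C * (C - 1) := by
        rw [Nat.choose_two_right, mul_comm]
        exact Nat.div_mul_le_self _ _
      calc 2 * L.card ≤ 2 * (N' * C.choose 2) := by omega
        _ = N' * (2 * C.choose 2) := by ring
        _ ≤ N' * (C * (C - 1)) := Nat.mul_le_mul_left _ h2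
    calc 2 * lR ≤ ((N' * (C * (C - 1)) : ℕ) : ℝ) := by rw [hlR]; exact_mod_cast hnat
      _ = (N' : ℝ) * ((C : ℝ) * ((C : ℝ) - 1)) := by
          push_cast [Nat.cast_sub (show 1 ≤ C by omega)]; ring
  have hcount' : ((C : ℝ) - 1) * lenR ≤ qR + ((C : ℝ) - 1) * (n : ℝ) := by
    have := hcount2
    calc ((C : ℝ) - 1) * lenR = (((C - 1) * ℓst.length : ℕ) : ℝ) := by
          push_cast [Nat.cast_sub (show 1 ≤ C by omega)]; ring
      _ ≤ ((NL.card + (C - 1) * n : ℕ) : ℝ) := by exact_mod_cast hcount2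
      _ = qR + ((C : ℝ) - 1) * (n : ℝ) := by
          push_cast [Nat.cast_sub (show 1 ≤ C by omega)]; ring
  have hMle : (M₀ : ℝ) ≤ (N' : ℝ) := by exact_mod_cast hM₀
  have hpos : (0 : ℝ) < 2 * α * ((C : ℝ) - 1) := by
    apply mul_pos (by linarith) (by linarith)
  have key : ((M₀ : ℝ) + lenR) * (2 * α * ((C : ℝ) - 1)) ≤
      ((N' : ℝ) * (C : ℝ) / (2 * α) + 2 * (n : ℝ)) * (2 * α * ((C : ℝ) - 1)) := by
    have hRHS : ((N' : ℝ) * (C : ℝ) / (2 * α) + 2 * (n : ℝ)) * (2 * α * ((C : ℝ) - 1)) =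
        (N' : ℝ) * (C : ℝ) * ((C : ℝ) - 1) + 4 * (n : ℝ) * α * ((C : ℝ) - 1) := by
      field_simp
      ring
    rw [hRHS]
    have e1 : 2 * α * (((C : ℝ) - 1) * lenR) ≤ 2 * α * (qR + ((C : ℝ) - 1) * (n : ℝ)) :=
      mul_le_mul_of_nonneg_left hcount' (by linarith)
    have e2 : 2 * (α * qR) ≤ 2 * ((1 - α) * lR) :=
      mul_le_mul_of_nonneg_left hq (by norm_num)
    have e3 : (1 - α) * (2 * lR) ≤ (1 - α) * ((N' : ℝ) * ((C : ℝ) * ((C : ℝ) - 1))) :=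
      mul_le_mul_of_nonneg_left hlbound (by linarith)
    have e4 : (2 * α * ((C : ℝ) - 1)) * (M₀ : ℝ) ≤ (2 * α * ((C : ℝ) - 1)) * (N' : ℝ) :=
      mul_le_mul_of_nonneg_left hMle (le_of_lt hpos)
    have e5 : (0 : ℝ) ≤ α * ((C : ℝ) - 2) * (((C : ℝ) - 1) * (N' : ℝ)) := by
      apply mul_nonneg (mul_nonneg (le_of_lt hα0) (by linarith))
      apply mul_nonneg (by linarith) (Nat.cast_nonneg _)
    have e6 : (0 : ℝ) ≤ α * ((C : ℝ) - 1) * (n : ℝ) := by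
      apply mul_nonneg (mul_nonneg (le_of_lt hα0) (by linarith)) (Nat.cast_nonneg _)
    linarith [e1, e2, e3, e4, e5, e6]
  have hfin : (M₀ : ℝ) + lenR ≤ (N' : ℝ) * (C : ℝ) / (2 * α) + 2 * (n : ℝ) :=
    le_of_mul_le_mul_right key hpos
  push_cast
  exact hfin
end

section
/- Let G = (V, E) be a finite simple graph with |V| = n, let C ≥ 1 be a capacity, and let δ be a real number with 1/2 ≤ δ < 1. Suppose that for every subset W ⊆ V with |W| > C there exist sets A, B ⊆ W with A ∪ B = W, no edge of G joining a vertex of A \ B to a vertex of B \ A, |A| ≤ δ·|W|, and |B| ≤ δ·|W|. Then for every natural number l with δ^l · n ≤ C, there exists a family of at most 2^l subsets of V, each of cardinality at most C, whose union is V, such that every edge of G has both endpoints contained in some member of the family (i.e., a placement with capacity C using at most 2^l members in which every edge is local). -/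
open Finset
open scoped Classical

open Finset
open scoped Classical

theorem recursive_separator_aux {V : Type*} [Fintype V] [DecidableEq V]
    (G : SimpleGraph V) (C : ℕ) (δ : ℝ) (hδ0 : 0 ≤ δ)
    (hsep : ∀ W : Finset V, C < W.card →
      ∃ A B : Finset V, A ⊆ W ∧ B ⊆ W ∧ A ∪ B = W ∧
        (∀ a ∈ A \ B, ∀ b ∈ B \ A, ¬ G.Adj a b) ∧
        (A.card : ℝ) ≤ δ * W.card ∧ (B.card : ℝ) ≤ δ * W.card) :
    ∀ l : ℕ, ∀ W : Finset V, δ ^ l * (W.card : ℝ) ≤ (C : ℝ) →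
      ∃ (N : ℕ) (P : Fin N → Finset V), N ≤ 2 ^ l ∧
        (∀ i, (P i).card ≤ C) ∧ (∀ v ∈ W, ∃ i, v ∈ P i) ∧
        (∀ a b : V, G.Adj a b → a ∈ W → b ∈ W → ∃ i, a ∈ P i ∧ b ∈ P i) := by
  intro l
  induction l with
  | zero =>
    intro W hW
    simp only [pow_zero, one_mul] at hW
    have hWC : W.card ≤ C := by exact_mod_cast hW
    exact ⟨1, fun _ => W, le_refl _, fun _ => hWC, fun v hv => ⟨0, hv⟩,
      fun a b _ ha hb => ⟨0, ha, hb⟩⟩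
  | succ l ih =>
    intro W hW
    by_cases hcase : W.card ≤ C
    · exact ⟨1, fun _ => W, Nat.one_le_two_pow, fun _ => hcase, fun v hv => ⟨0, hv⟩,
        fun a b _ ha hb => ⟨0, ha, hb⟩⟩
    · push_neg at hcase
      obtain ⟨A, B, hAW, hBW, hABW, hnoadj, hAc, hBc⟩ := hsep W hcase
      have hpow : (0 : ℝ) ≤ δ ^ l := pow_nonneg hδ0 l
      have hA : δ ^ l * (A.card : ℝ) ≤ (C : ℝ) := by
        calc δ ^ l * (A.card : ℝ) ≤ δ ^ l * (δ * W.card) :=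
              mul_le_mul_of_nonneg_left hAc hpow
          _ = δ ^ (l + 1) * W.card := by ring
          _ ≤ C := hW
      have hB : δ ^ l * (B.card : ℝ) ≤ (C : ℝ) := by
        calc δ ^ l * (B.card : ℝ) ≤ δ ^ l * (δ * W.card) :=
              mul_le_mul_of_nonneg_left hBc hpow
          _ = δ ^ (l + 1) * W.card := by ring
          _ ≤ C := hW
      obtain ⟨N₁, P₁, hN₁, hcap₁, hcov₁, hloc₁⟩ := ih A hA
      obtain ⟨N₂, P₂, hN₂, hcap₂, hcov₂, hloc₂⟩ := ih B hB
      set P : Fin (N₁ + N₂) → Finset V := fun i =>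
        if h : (i : ℕ) < N₁ then P₁ ⟨i, h⟩ else P₂ ⟨(i : ℕ) - N₁, by omega⟩ with hP
      have emb₁ : ∀ j : Fin N₁, ∃ i : Fin (N₁ + N₂), P i = P₁ j := by
        intro j
        refine ⟨⟨(j : ℕ), by omega⟩, ?_⟩
        simp [hP, j.isLt]
      have emb₂ : ∀ j : Fin N₂, ∃ i : Fin (N₁ + N₂), P i = P₂ j := by
        intro j
        refine ⟨⟨N₁ + (j : ℕ), by omega⟩, ?_⟩
        simp [hP]
      refine ⟨N₁ + N₂, P, ?_, ?_, ?_, ?_⟩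
      · calc N₁ + N₂ ≤ 2 ^ l + 2 ^ l := Nat.add_le_add hN₁ hN₂
          _ = 2 ^ (l + 1) := by ring
      · intro i
        by_cases h : (i : ℕ) < N₁
        · simpa [hP, h] using hcap₁ ⟨i, h⟩
        · simpa [hP, h] using hcap₂ ⟨(i : ℕ) - N₁, by omega⟩
      · intro v hv
        rw [← hABW, mem_union] at hv
        rcases hv with hv | hv
        · obtain ⟨j, hj⟩ := hcov₁ v hv
          obtain ⟨i, hi⟩ := emb₁ j
          exact ⟨i, hi ▸ hj⟩
        · obtain ⟨j, hj⟩ := hcov₂ v hv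
          obtain ⟨i, hi⟩ := emb₂ j
          exact ⟨i, hi ▸ hj⟩
      · intro a b hab ha hb
        rw [← hABW, mem_union] at ha hb
        have key : (a ∈ A ∧ b ∈ A) ∨ (a ∈ B ∧ b ∈ B) := by
          by_contra hcon
          push_neg at hcon
          rcases ha with ha | ha <;> rcases hb with hb | hb
          · exact hcon.1 ha hb
          · by_cases ha' : a ∈ B
            · exact hcon.2 ha' hb
            · by_cases hb' : b ∈ A
              · exact hcon.1 ha hb'
              · exact hnoadj a (mem_sdiff.mpr ⟨ha, ha'⟩) b (mem_sdiff.mpr ⟨hb, hb'⟩) hab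
          · by_cases hb' : b ∈ B
            · exact hcon.2 ha hb'
            · by_cases ha' : a ∈ A
              · exact hcon.1 ha' hb
              · exact hnoadj b (mem_sdiff.mpr ⟨hb, hb'⟩) a (mem_sdiff.mpr ⟨ha, ha'⟩) hab.symm
          · exact hcon.2 ha hb
        rcases key with ⟨ha', hb'⟩ | ⟨ha', hb'⟩
        · obtain ⟨j, hja, hjb⟩ := hloc₁ a b hab ha' hb'
          obtain ⟨i, hi⟩ := emb₁ j
          exact ⟨i, hi ▸ hja, hi ▸ hjb⟩
        · obtain ⟨j, hja, hjb⟩ := hloc₂ a b hab ha' hb'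
          obtain ⟨i, hi⟩ := emb₂ j
          exact ⟨i, hi ▸ hja, hi ▸ hjb⟩

/-- If every vertex subset `W` with `|W| > C` admits a `δ`-balanced separation
(`1/2 ≤ δ < 1`), then for every `l` with `δ^l * n ≤ C` there is a placement with capacity
`C` using at most `2^l` members in which every edge is local. -/
theorem recursive_separator_placement {V : Type*} [Fintype V] [DecidableEq V]
    (G : SimpleGraph V) [DecidableRel G.Adj] (n : ℕ) (hn : Fintype.card V = n)
    (C : ℕ) (hC : 1 ≤ C) (δ : ℝ) (hδ0 : 1 / 2 ≤ δ) (hδ1 : δ < 1)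
    (hsep : ∀ W : Finset V, C < W.card →
      ∃ A B : Finset V, A ⊆ W ∧ B ⊆ W ∧ A ∪ B = W ∧
        (∀ a ∈ A \ B, ∀ b ∈ B \ A, ¬ G.Adj a b) ∧
        (A.card : ℝ) ≤ δ * W.card ∧ (B.card : ℝ) ≤ δ * W.card) :
    ∀ l : ℕ, δ ^ l * (n : ℝ) ≤ (C : ℝ) →
      ∃ (N : ℕ) (P : Fin N → Finset V), N ≤ 2 ^ l ∧ IsPlacement C P ∧
        ∀ e ∈ G.edgeFinset, IsLocal P e := by
  intro l hl
  have hδ0' : (0 : ℝ) ≤ δ := le_trans (by norm_num) hδ0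
  have hcard : ((Finset.univ : Finset V).card : ℝ) = (n : ℝ) := by
    rw [Finset.card_univ, hn]
  obtain ⟨N, P, hN, hcap, hcov, hloc⟩ :=
    recursive_separator_aux G C δ hδ0' hsep l Finset.univ (by rw [hcard]; exact hl)
  refine ⟨N, P, hN, ⟨hcap, fun v => hcov v (mem_univ v)⟩, ?_⟩
  intro e he
  induction e using Sym2.ind with
  | _ a b =>
    rw [SimpleGraph.mem_edgeFinset, SimpleGraph.mem_edgeSet] at he
    obtain ⟨i, hia, hib⟩ := hloc a b he (mem_univ a) (mem_univ b)
    refine ⟨i, fun v hv => ?_⟩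
    rcases Sym2.mem_iff.mp hv with rfl | rfl <;> assumption
end

section
/- Let G = (V, E) be a finite simple graph with |V| = n, let C ≥ 1 be a capacity, and set N_e = ⌈n/C⌉. Suppose that for every subset W ⊆ V with |W| > C there exist sets A, B ⊆ W with A ∪ B = W, no edge of G joining a vertex of A \ B to a vertex of B \ A, |A| ≤ 0.67·|W|, and |B| ≤ 0.67·|W|. Then there exists a placement of G with capacity C using at most 2·N_e^{1.74} members in which every edge of G is local (i.e., every edge has span 1). -/
open Finset
open scoped Classical

lemma aux_two_le : (2:ℝ) ≤ (100/67:ℝ) ^ (1.74:ℝ) := by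
  have h0 : (0:ℝ) ≤ (100/67:ℝ) ^ (1.74:ℝ) := Real.rpow_nonneg (by norm_num) _
  refine le_of_pow_le_pow_left₀ (n := 100) (by norm_num) h0 ?_
  have h1 : ((100/67:ℝ) ^ (1.74:ℝ)) ^ (100:ℕ) = (100/67:ℝ) ^ (174:ℕ) := by
    rw [← Real.rpow_natCast ((100/67:ℝ) ^ (1.74:ℝ)) 100, ← Real.rpow_mul (by norm_num),
      ← Real.rpow_natCast (100/67:ℝ) 174]
    norm_num
  rw [h1]
  norm_num

lemma aux_decomp {V : Type*} [Fintype V] [DecidableEq V]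
    (G : SimpleGraph V) [DecidableRel G.Adj] (C : ℕ)
    (hsep : ∀ W : Finset V, C < W.card →
      ∃ A B : Finset V, A ⊆ W ∧ B ⊆ W ∧ A ∪ B = W ∧
        (∀ a ∈ A \ B, ∀ b ∈ B \ A, ¬ G.Adj a b) ∧
        (A.card : ℝ) ≤ 0.67 * W.card ∧ (B.card : ℝ) ≤ 0.67 * W.card) :
    ∀ (d : ℕ) (W : Finset V), (W.card : ℝ) ≤ (C : ℝ) * (100/67) ^ d →
    ∃ (N : ℕ) (P : Fin N → Finset V), N ≤ 2 ^ d ∧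
      (∀ i, (P i).card ≤ C) ∧ (∀ v ∈ W, ∃ i, v ∈ P i) ∧
      (∀ e ∈ G.edgeFinset, (∀ v ∈ e, v ∈ W) → IsLocal P e) := by
  intro d
  induction d with
  | zero =>
    intro W hW
    have hWC : W.card ≤ C := by exact_mod_cast (by simpa using hW)
    exact ⟨1, fun _ => W, le_refl _, fun _ => hWC, fun v hv => ⟨0, hv⟩,
      fun e _ hsub => ⟨0, hsub⟩⟩
  | succ d ih =>
    intro W hW
    by_cases hWC : W.card ≤ C
    · exact ⟨1, fun _ => W, Nat.one_le_two_pow, fun _ => hWC, fun v hv => ⟨0, hv⟩,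
        fun e _ hsub => ⟨0, hsub⟩⟩
    · push_neg at hWC
      obtain ⟨A, B, hAW, hBW, hABW, hnoedge, hA, hB⟩ := hsep W hWC
      have hstep : (0.67:ℝ) * ((C:ℝ) * (100/67) ^ (d+1)) = (C:ℝ) * (100/67) ^ d := by
        rw [pow_succ]; ring
      have hA' : (A.card : ℝ) ≤ (C:ℝ) * (100/67) ^ d := by
        calc (A.card : ℝ) ≤ 0.67 * W.card := hA
          _ ≤ 0.67 * ((C:ℝ) * (100/67) ^ (d+1)) := by
              have : (0:ℝ) < 0.67 := by norm_num
              nlinarith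
          _ = (C:ℝ) * (100/67) ^ d := hstep
      have hB' : (B.card : ℝ) ≤ (C:ℝ) * (100/67) ^ d := by
        calc (B.card : ℝ) ≤ 0.67 * W.card := hB
          _ ≤ 0.67 * ((C:ℝ) * (100/67) ^ (d+1)) := by
              have : (0:ℝ) < 0.67 := by norm_num
              nlinarith
          _ = (C:ℝ) * (100/67) ^ d := hstep
      obtain ⟨N₁, P₁, hN₁, hcap₁, hcov₁, hloc₁⟩ := ih A hA'
      obtain ⟨N₂, P₂, hN₂, hcap₂, hcov₂, hloc₂⟩ := ih B hB'
      refine ⟨N₁ + N₂, Fin.append P₁ P₂, ?_, ?_, ?_, ?_⟩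
      · calc N₁ + N₂ ≤ 2 ^ d + 2 ^ d := Nat.add_le_add hN₁ hN₂
          _ = 2 ^ (d+1) := by ring
      · intro i
        refine Fin.addCases (fun j => ?_) (fun j => ?_) i
        · rw [Fin.append_left]; exact hcap₁ j
        · rw [Fin.append_right]; exact hcap₂ j
      · intro v hv
        rw [← hABW, Finset.mem_union] at hv
        rcases hv with hv | hv
        · obtain ⟨i, hi⟩ := hcov₁ v hv
          exact ⟨Fin.castAdd N₂ i, by rwa [Fin.append_left]⟩
        · obtain ⟨i, hi⟩ := hcov₂ v hv
          exact ⟨Fin.natAdd N₁ i, by rwa [Fin.append_right]⟩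
      · intro e he hsub
        have liftA : (∀ v ∈ e, v ∈ A) → IsLocal (Fin.append P₁ P₂) e := by
          intro h
          obtain ⟨i, hi⟩ := hloc₁ e he h
          exact ⟨Fin.castAdd N₂ i, by intro v hv; rw [Fin.append_left]; exact hi v hv⟩
        have liftB : (∀ v ∈ e, v ∈ B) → IsLocal (Fin.append P₁ P₂) e := by
          intro h
          obtain ⟨i, hi⟩ := hloc₂ e he h
          exact ⟨Fin.natAdd N₁ i, by intro v hv; rw [Fin.append_right]; exact hi v hv⟩
        induction e with
        | _ u v =>
          have hadj : G.Adj u v := by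
            rw [SimpleGraph.mem_edgeFinset, SimpleGraph.mem_edgeSet] at he
            exact he
          have hu : u ∈ A ∪ B := by rw [hABW]; exact hsub u (Sym2.mem_mk_left u v)
          have hv : v ∈ A ∪ B := by rw [hABW]; exact hsub v (Sym2.mem_mk_right u v)
          have memAB : ∀ w, w ∈ s(u, v) → w = u ∨ w = v := by
            intro w hw; exact Sym2.mem_iff.mp hw
          rw [Finset.mem_union] at hu hv
          have caseA : u ∈ A → v ∈ A → IsLocal (Fin.append P₁ P₂) s(u, v) := by
            intro h1 h2; apply liftA; intro w hw
            rcases memAB w hw with rfl | rfl <;> assumption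
          have caseB : u ∈ B → v ∈ B → IsLocal (Fin.append P₁ P₂) s(u, v) := by
            intro h1 h2; apply liftB; intro w hw
            rcases memAB w hw with rfl | rfl <;> assumption
          rcases hu with hu | hu <;> rcases hv with hv | hv
          · exact caseA hu hv
          · by_cases h1 : u ∈ B
            · exact caseB h1 hv
            · by_cases h2 : v ∈ A
              · exact caseA hu h2
              · exact absurd hadj (hnoedge u (Finset.mem_sdiff.mpr ⟨hu, h1⟩)
                  v (Finset.mem_sdiff.mpr ⟨hv, h2⟩))
          · by_cases h1 : v ∈ B
            · exact caseB hu h1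
            · by_cases h2 : u ∈ A
              · exact caseA h2 hv
              · exact absurd hadj.symm (hnoedge v (Finset.mem_sdiff.mpr ⟨hv, h1⟩)
                  u (Finset.mem_sdiff.mpr ⟨hu, h2⟩))
          · exact caseB hu hv

/-- If every vertex subset `W` with `|W| > C` admits a `0.67`-balanced
separation, then there is a placement with capacity `C` using at most `2 * N_e ^ 1.74`
members (where `N_e = ⌈n / C⌉`) in which every edge is local. -/
theorem separator_placement_Ne_pow {V : Type*} [Fintype V] [DecidableEq V]
    (G : SimpleGraph V) [DecidableRel G.Adj] (n : ℕ) (hn : Fintype.card V = n)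
    (C : ℕ) (hC : 1 ≤ C)
    (hsep : ∀ W : Finset V, C < W.card →
      ∃ A B : Finset V, A ⊆ W ∧ B ⊆ W ∧ A ∪ B = W ∧
        (∀ a ∈ A \ B, ∀ b ∈ B \ A, ¬ G.Adj a b) ∧
        (A.card : ℝ) ≤ 0.67 * W.card ∧ (B.card : ℝ) ≤ 0.67 * W.card) :
    ∃ (N : ℕ) (P : Fin N → Finset V), IsPlacement C P ∧
      (∀ e ∈ G.edgeFinset, IsLocal P e) ∧
      (N : ℝ) ≤ 2 * ((⌈(n : ℝ) / (C : ℝ)⌉₊ : ℝ)) ^ (1.74 : ℝ) := by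
  by_cases hn0 : n = 0
  · subst hn0
    have hemp : IsEmpty V := Fintype.card_eq_zero_iff.mp hn
    refine ⟨0, Fin.elim0, ⟨fun i => i.elim0, fun v => (hemp.false v).elim⟩, ?_, ?_⟩
    · intro e he
      exact absurd he (by
        induction e with
        | _ u v => exact (hemp.false u).elim)
    · simp only [Nat.cast_zero]
      positivity
  · -- n ≥ 1
    have hC0 : (0:ℝ) < C := by exact_mod_cast hC
    set Ne := ⌈(n : ℝ) / (C : ℝ)⌉₊ with hNe
    have hNe1 : (1:ℝ) ≤ (Ne : ℝ) := by
      have : (0:ℝ) < (n:ℝ) / C := by positivity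
      have : 1 ≤ Ne := by
        rw [hNe, Nat.one_le_ceil_iff]
        positivity
      exact_mod_cast this
    have hexists : ∃ d : ℕ, (n : ℝ) ≤ (C:ℝ) * (100/67) ^ d := by
      obtain ⟨d, hd⟩ := pow_unbounded_of_one_lt ((n:ℝ)/C) (by norm_num : (1:ℝ) < 100/67)
      exact ⟨d, by rw [div_lt_iff₀ hC0] at hd; linarith [hd]⟩
    set d := Nat.find hexists with hd
    have hdle : (n : ℝ) ≤ (C:ℝ) * (100/67) ^ d := Nat.find_spec hexists
    have hcard : ((Finset.univ : Finset V).card : ℝ) ≤ (C:ℝ) * (100/67) ^ d := by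
      rw [Finset.card_univ, hn]; exact hdle
    obtain ⟨N, P, hNle, hcap, hcov, hloc⟩ := aux_decomp G C hsep d Finset.univ hcard
    refine ⟨N, P, ⟨hcap, fun v => hcov v (Finset.mem_univ v)⟩,
      fun e he => hloc e he (fun v _ => Finset.mem_univ v), ?_⟩
    have hpow : (2:ℝ) ^ d ≤ 2 * (Ne : ℝ) ^ (1.74:ℝ) := by
      rcases Nat.eq_zero_or_pos d with hd0 | hd0
      · rw [hd0]
        have : (1:ℝ) ≤ (Ne : ℝ) ^ (1.74:ℝ) := Real.one_le_rpow hNe1 (by norm_num)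
        simpa using by linarith
      · obtain ⟨k, hdk⟩ : ∃ k, d = k + 1 := ⟨d - 1, (Nat.succ_pred_eq_of_pos hd0).symm⟩
        have hkfail : ¬ ((n : ℝ) ≤ (C:ℝ) * (100/67) ^ k) := Nat.find_min hexists (by omega)
        rw [hdk]
        push_neg at hkfail
        have hkNe : ((100:ℝ)/67) ^ k ≤ (Ne : ℝ) := by
          have h1 : ((100:ℝ)/67) ^ k < (n:ℝ) / C := by
            rw [lt_div_iff₀ hC0]; linarith
          have h2 : (n:ℝ)/C ≤ (Ne : ℝ) := Nat.le_ceil _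
          linarith
        have h3 : ((100/67:ℝ) ^ k) ^ (1.74:ℝ) ≤ (Ne : ℝ) ^ (1.74:ℝ) :=
          Real.rpow_le_rpow (by positivity) hkNe (by norm_num)
        have h4 : (2:ℝ) ^ k ≤ ((100/67:ℝ) ^ k) ^ (1.74:ℝ) := by
          rw [← Real.rpow_natCast (100/67:ℝ) k, ← Real.rpow_mul (by norm_num),
            mul_comm, Real.rpow_mul (by norm_num), Real.rpow_natCast]
          exact pow_le_pow_left₀ (by norm_num) aux_two_le k
        calc (2:ℝ) ^ (k+1) = 2 * 2 ^ k := by ring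
          _ ≤ 2 * (Ne : ℝ) ^ (1.74:ℝ) := by nlinarith
    calc (N : ℝ) ≤ ((2:ℕ) ^ d : ℕ) := by exact_mod_cast hNle
      _ = (2:ℝ) ^ d := by push_cast; ring
      _ ≤ 2 * (Ne : ℝ) ^ (1.74:ℝ) := hpow
end
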